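/- Define f̄_T(x) = -Ψ(1)Φ(x₁) + Σ_{i=2}^{T} [Ψ(-x_{i-1})Φ(-x_i) - Ψ(x_{i-1})Φ(x_i)]. Then f̄_T(0) - inf_x f̄_T(x) ≤ 12T. -/
import Mathlib


open scoped BigOperators

/-- Ψ(x) = 0 for x ≤ 1/2 and exp(1 - 1/(2x-1)²) for x > 1/2. -/
noncomputable def Psi (x : ℝ) : ℝ :=
  if x ≤ 1/2 then 0 else Real.exp (1 - 1 / (2*x - 1)^2)

/-- Φ(y) = √e · ∫_{-∞}^y e^{-t²/2} dt. -/
noncomputable def Phi (y : ℝ) : ℝ :=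
  Real.sqrt (Real.exp 1) * ∫ t in Set.Iic y, Real.exp (-t^2/2)

/-- The Nesterov-style hard instance f̄_T (0-indexed coordinates). -/
noncomputable def fbar (T : ℕ) (x : Fin T → ℝ) : ℝ :=
  ∑ i : Fin T,
    if (i : ℕ) = 0 then -(Psi 1 * Phi (x i))
    else Psi (-(x ⟨i.1 - 1, lt_of_le_of_lt (Nat.sub_le _ _) i.isLt⟩)) * Phi (-(x i))
         - Psi (x ⟨i.1 - 1, lt_of_le_of_lt (Nat.sub_le _ _) i.isLt⟩) * Phi (x i)

/-- j-th partial derivative of f̄_T at x. -/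
noncomputable def fpartial (T : ℕ) (x : Fin T → ℝ) (j : Fin T) : ℝ :=
  deriv (fun s => fbar T (Function.update x j s)) (x j)


lemma Psi_nonneg (x : ℝ) : 0 ≤ Psi x := by
  unfold Psi; split
  · exact le_refl 0
  · positivity

lemma Psi_le (x : ℝ) : Psi x ≤ Real.exp 1 := by
  unfold Psi; split
  · positivity
  · have h : (0:ℝ) ≤ 1 / (2*x - 1)^2 := by positivity
    exact Real.exp_le_exp.mpr (by linarith)

lemma Phi_nonneg (y : ℝ) : 0 ≤ Phi y := by
  unfold Phi
  apply mul_nonneg (Real.sqrt_nonneg _)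
  exact MeasureTheory.setIntegral_nonneg measurableSet_Iic fun t _ => (Real.exp_pos _).le

lemma Phi_le (y : ℝ) : Phi y ≤ Real.sqrt (Real.exp 1) * Real.sqrt (2*Real.pi) := by
  unfold Phi
  have hint : MeasureTheory.Integrable (fun t : ℝ => Real.exp (-t^2/2)) := by
    have := integrable_exp_neg_mul_sq (b := (1:ℝ)/2) (by norm_num)
    convert this using 2 with t; ring_nf
  have h1 : (∫ t in Set.Iic y, Real.exp (-t^2/2)) ≤ ∫ t, Real.exp (-t^2/2) :=
    MeasureTheory.setIntegral_le_integral hint (Filter.Eventually.of_forall fun t => (Real.exp_pos _).le)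
  have h2 : (∫ t : ℝ, Real.exp (-t^2/2)) = Real.sqrt (2*Real.pi) := by
    have := integral_gaussian ((1:ℝ)/2)
    simp only [show ∀ t:ℝ, -(1/2) * t^2 = -t^2/2 by intro t; ring] at this
    rw [this]; norm_num [mul_comm]
  exact mul_le_mul_of_nonneg_left (h1.trans_eq h2) (Real.sqrt_nonneg (Real.exp 1))

lemma numeric : Real.exp 1 * (Real.sqrt (Real.exp 1) * Real.sqrt (2*Real.pi)) ≤ 12 := by
  have he : Real.exp 1 < 2.7182818286 := Real.exp_one_lt_d9
  have he0 : (0:ℝ) < Real.exp 1 := Real.exp_pos 1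
  have hp : Real.pi < 3.15 := Real.pi_lt_d2
  have hp0 : (0:ℝ) < Real.pi := Real.pi_pos
  set s := Real.sqrt (Real.exp 1) with hs
  set t := Real.sqrt (2*Real.pi) with ht
  have hs2 : s^2 = Real.exp 1 := Real.sq_sqrt he0.le
  have ht2 : t^2 = 2*Real.pi := Real.sq_sqrt (by positivity)
  have hs0 : 0 ≤ s := Real.sqrt_nonneg _
  have ht0 : 0 ≤ t := Real.sqrt_nonneg _
  have hsb : s ≤ 1.65 := by nlinarith
  have htb : t ≤ 2.52 := by nlinarith
  have hst : s * t ≤ 4.158 := by nlinarith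
  calc Real.exp 1 * (s*t) ≤ 2.7182818286 * 4.158 :=
        mul_le_mul he.le hst (by nlinarith) (by norm_num)
    _ ≤ 12 := by norm_num

lemma prod_le_twelve (a b : ℝ) : Psi a * Phi b ≤ 12 :=
  (mul_le_mul (Psi_le a) (Phi_le b) (Phi_nonneg b) (Real.exp_pos 1).le).trans numeric

lemma Psi_zero : Psi 0 = 0 := by unfold Psi; norm_num

lemma fbar_zero_le (T : ℕ) : fbar T 0 ≤ 0 := by
  unfold fbar
  apply Finset.sum_nonpos
  intro i _
  split
  · simp only [Pi.zero_apply]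
    have := mul_nonneg (Psi_nonneg 1) (Phi_nonneg 0)
    linarith
  · simp [Psi_zero]

lemma fbar_lower (T : ℕ) (x : Fin T → ℝ) : -(12 * (T:ℝ)) ≤ fbar T x := by
  unfold fbar
  have h : ∀ i ∈ Finset.univ (α := Fin T), (-12 : ℝ) ≤
      (if (i : ℕ) = 0 then -(Psi 1 * Phi (x i))
       else Psi (-(x ⟨i.1 - 1, lt_of_le_of_lt (Nat.sub_le _ _) i.isLt⟩)) * Phi (-(x i))
            - Psi (x ⟨i.1 - 1, lt_of_le_of_lt (Nat.sub_le _ _) i.isLt⟩) * Phi (x i)) := by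
    intro i _
    split
    · have := prod_le_twelve 1 (x i); linarith
    · have h1 := mul_nonneg (Psi_nonneg (-(x ⟨i.1 - 1, lt_of_le_of_lt (Nat.sub_le _ _) i.isLt⟩)))
        (Phi_nonneg (-(x i)))
      have h2 := prod_le_twelve (x ⟨i.1 - 1, lt_of_le_of_lt (Nat.sub_le _ _) i.isLt⟩) (x i)
      linarith
  have := Finset.sum_le_sum h
  simpa [mul_comm] using this

/-- f̄_T(0) - inf f̄_T ≤ 12T (stated as: f̄_T(0) - f̄_T(x) ≤ 12T for every x). -/
theorem stmt_6 (T : ℕ) (hT : 1 ≤ T) :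
    ∀ x : Fin T → ℝ, fbar T 0 - fbar T x ≤ 12 * T := by
  intro x
  have h1 := fbar_zero_le T
  have h2 := fbar_lower T x
  linarith
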